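/- The family (P_U)_{U ⊆ Σ}, indexed by all 2^{|Σ|} subsets of Σ, is linearly independent over the prime field 𝔽_p; equivalently, the 𝔽_p-vector space 𝒱_Σ has dimension 2^{|Σ|}. -/
import Mathlib


/- Proposition 10 of Pellarin, "A sum-shuffle formula for zeta values in Tate algebras". -/

set_option synthInstance.maxHeartbeats 1000000
set_option maxHeartbeats 1000000
set_option linter.unusedSectionVars false

noncomputable section

namespace HasseStability

variable (p e : ℕ) [Fact p.Prime] (σ : Type) [Fintype σ] [DecidableEq σ]

abbrev Fq : Type := GaloisField p e

instance : Fintype (Fq p e) := Fintype.ofFinite _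

/-- `𝔽_q[θ][t_i : i ∈ Σ]`, viewed as polynomials in `θ` over `𝔽_q[t_i : i ∈ Σ]`. -/
abbrev Rθ : Type := Polynomial (MvPolynomial σ (Fq p e))

/-- `P_U = [1]·S_1(1; σ_U) = Σ_{λ∈𝔽_q} ((θ-λ)^{q-1} - 1)·∏_{i∈U}(t_i - λ)`. -/
def P (U : Finset σ) : Rθ p e σ :=
  ∑ l : Fq p e,
    ((Polynomial.X - Polynomial.C (MvPolynomial.C l)) ^ (p ^ e - 1) - 1) *
      Polynomial.C (∏ i ∈ U, (MvPolynomial.X i - MvPolynomial.C l))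

/-- `𝒱_U`: the `𝔽_p`-linear span of the polynomials `P_W`, `W ⊆ U`. -/
def V (U : Finset σ) : Submodule (ZMod p) (Rθ p e σ) :=
  Submodule.span (ZMod p) {x | ∃ W ⊆ U, x = P p e σ W}

/-! ### Auxiliary material for the proof -/

/-- The exponent finsupp of the multilinear monomial `∏_{i∈U} t_i`. -/
def expU (U : Finset σ) : σ →₀ ℕ := ∑ i ∈ U, Finsupp.single i 1

lemma expU_apply (U : Finset σ) (j : σ) : expU σ U j = if j ∈ U then 1 else 0 := by
  rw [expU, Finset.sum_apply']
  simp [Finsupp.single_apply]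

lemma expU_injective : Function.Injective (expU σ) := by
  intro U V h
  ext j
  have hj : expU σ U j = expU σ V j := by rw [h]
  rw [expU_apply, expU_apply] at hj
  by_cases hU : j ∈ U <;> by_cases hV : j ∈ V <;> simp [hU, hV] at hj ⊢

lemma prod_X_eq (U : Finset σ) :
    (∏ i ∈ U, (MvPolynomial.X i : MvPolynomial σ (Fq p e)))
      = MvPolynomial.monomial (expU σ U) 1 := by
  rw [← MvPolynomial.prod_X_pow_eq_monomial]
  have hsupp : (expU σ U).support = U := by
    ext j
    simp [Finsupp.mem_support_iff, expU_apply]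
  rw [hsupp]
  refine Finset.prod_congr rfl fun x hx => ?_
  rw [expU_apply]
  simp [hx]

/-- Evaluation at `θ = 0`, as an `𝔽_p`-linear map. -/
def ev : Rθ p e σ →ₗ[ZMod p] MvPolynomial σ (Fq p e) where
  toFun := Polynomial.eval 0
  map_add' := by simp
  map_smul' := by
    intro c x
    simp only [RingHom.id_apply]
    rw [Algebra.smul_def, Algebra.smul_def, Polynomial.eval_mul,
      Polynomial.algebraMap_apply, Polynomial.eval_C]

lemma hcard (he : 1 ≤ e) : Fintype.card (Fq p e) = p ^ e := by
  rw [← Nat.card_eq_fintype_card, GaloisField.card p e (by omega)]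

lemma ev_P (he : 1 ≤ e) (U : Finset σ) :
    ev p e σ (P p e σ U) = - ∏ i ∈ U, MvPolynomial.X i := by
  have hp : 1 < p := (Fact.out : p.Prime).one_lt
  have hq : 1 < p ^ e := by
    calc 1 < p := hp
    _ ≤ p ^ e := Nat.le_self_pow (by omega) p
  show Polynomial.eval 0 (P p e σ U) = _
  rw [P, Polynomial.eval_finset_sum]
  rw [Finset.sum_eq_single 0]
  · simp [zero_pow (show p ^ e - 1 ≠ 0 by omega), Polynomial.eval_prod]
  · intro l _ hl
    have h1 : (-l) ^ (p ^ e - 1) = 1 := by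
      have := FiniteField.pow_card_sub_one_eq_one (-l) (neg_ne_zero.mpr hl)
      rwa [hcard p e he] at this
    simp only [Polynomial.eval_mul, Polynomial.eval_sub, Polynomial.eval_pow,
      Polynomial.eval_one, Polynomial.eval_C, Polynomial.eval_X, zero_sub,
      ← map_neg, ← map_pow, h1, map_one, sub_self, zero_mul]
  · simp

/-- **Lemma 13**: the polynomials `P_U`, `U ⊆ Σ`, are linearly independent over `𝔽_p`;
equivalently, `𝒱_Σ` has dimension `2^{|Σ|}` over `𝔽_p`. -/
theorem P_linearIndependent (he : 1 ≤ e) :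
    LinearIndependent (ZMod p) (fun U : Finset σ => P p e σ U) := by
  have hmono : LinearIndependent (Fq p e)
      (fun U : Finset σ => (MvPolynomial.monomial (expU σ U) (1 : Fq p e))) := by
    have := (MvPolynomial.basisMonomials σ (Fq p e)).linearIndependent.comp
      (expU σ) (expU_injective σ)
    simpa [Function.comp_def, MvPolynomial.coe_basisMonomials] using this
  have hZp : LinearIndependent (ZMod p)
      (fun U : Finset σ => (MvPolynomial.monomial (expU σ U) (1 : Fq p e))) := by
    refine hmono.restrict_scalars ?_
    intro a b hab
    simp only [Algebra.smul_def, mul_one] at hab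
    exact (algebraMap (ZMod p) (Fq p e)).injective hab
  have hneg : LinearIndependent (ZMod p)
      (fun U : Finset σ => -(MvPolynomial.monomial (expU σ U) (1 : Fq p e))) := by
    have h := hZp.units_smul (fun _ => -1)
    have h2 : ((fun _ : Finset σ => (-1 : (ZMod p)ˣ)) • fun U : Finset σ =>
        (MvPolynomial.monomial (expU σ U) (1 : Fq p e)))
        = fun U : Finset σ => -(MvPolynomial.monomial (expU σ U) (1 : Fq p e)) := by
      funext U
      simp [Units.smul_def]
    rwa [h2] at h
  apply LinearIndependent.of_comp (ev p e σ)
  have : (ev p e σ) ∘ (fun U : Finset σ => P p e σ U)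
      = fun U : Finset σ => -(MvPolynomial.monomial (expU σ U) (1 : Fq p e)) := by
    funext U
    rw [Function.comp_apply, ev_P p e σ he U, prod_X_eq]
  rw [this]
  exact hneg

end HasseStability
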